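/- Correctness of the Fourier-representation construction: let f : {0,1}^n → {0,1} be a Boolean function, and let S_1, …, S_k (k ≥ 1) enumerate the nonempty subsets S of {0,…,n−1} with f̂(S) ≠ 0. Set Θ = π · Σ_{S ⊆ {0,…,n−1}} f̂(S) (sum over all subsets including the empty set), and for i = 1,…,k set φ_i = −2π·f̂(S_i). Then for every x ∈ {0,1}^n, with s_i = χ_{S_i}(x) and M_i = cos(Θ/k + φ_i s_i)·σx + sin(Θ/k + φ_i s_i)·σy, one has ⟨v, (⊗_{i=1}^k M_i) v⟩ = (−1)^{f(x)}, where v is the k-qubit GHZ state. -/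
import Mathlib


open scoped BigOperators

/-- The Pauli X matrix. -/
noncomputable def sigmaX : Matrix (Fin 2) (Fin 2) ℂ := !![0, 1; 1, 0]

/-- The Pauli Y matrix. -/
noncomputable def sigmaY : Matrix (Fin 2) (Fin 2) ℂ := !![0, -Complex.I; Complex.I, 0]

/-- Equatorial single-qubit measurement operator with angle `α`. -/
noncomputable def Meq (α : ℝ) : Matrix (Fin 2) (Fin 2) ℂ :=
  (Real.cos α : ℂ) • sigmaX + (Real.sin α : ℂ) • sigmaY

/-- Tensor product of `k` single-qubit operators. -/
noncomputable def tensorOp {k : ℕ} (M : Fin k → Matrix (Fin 2) (Fin 2) ℂ) :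
    Matrix (Fin k → Fin 2) (Fin k → Fin 2) ℂ :=
  fun a b => ∏ i, M i (a i) (b i)

/-- The `k`-qubit GHZ state. -/
noncomputable def ghz (k : ℕ) : (Fin k → Fin 2) → ℂ :=
  fun a => if (∀ i, a i = 0) ∨ (∀ i, a i = 1) then ((Real.sqrt 2 : ℝ) : ℂ)⁻¹ else 0

/-- Standard Hermitian inner product, conjugate linear in the first argument. -/
noncomputable def inprod {ι : Type} [Fintype ι] (v w : ι → ℂ) : ℂ :=
  ∑ a, (starRingEnd ℂ) (v a) * w a

/-- The parity `χ_S(x) = ⊕_{i ∈ S} x_i ∈ {0,1}`. -/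
def chi {n : ℕ} (S : Finset (Fin n)) (x : Fin n → Bool) : ℕ :=
  (∑ i ∈ S, if x i then 1 else 0) % 2

/-- The Fourier coefficient `ĝ(S) = 2^{-n} Σ_x g(x) (-1)^{χ_S(x)}`. -/
noncomputable def fourierCoef {n : ℕ} (g : (Fin n → Bool) → ℝ) (S : Finset (Fin n)) : ℝ :=
  (2 ^ n : ℝ)⁻¹ * ∑ x : Fin n → Bool, g x * (-1 : ℝ) ^ chi S x

/-- A Boolean function viewed as a real-valued function. -/
def boolToReal {n : ℕ} (f : (Fin n → Bool) → Bool) : (Fin n → Bool) → ℝ :=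
  fun x => if f x then 1 else 0

/- ### Auxiliary lemmas -/

lemma meq00 (α : ℝ) : Meq α 0 0 = 0 := by simp [Meq, sigmaX, sigmaY]
lemma meq11 (α : ℝ) : Meq α 1 1 = 0 := by simp [Meq, sigmaX, sigmaY]
lemma meq10 (α : ℝ) : Meq α 1 0 = Complex.exp ((α : ℂ) * Complex.I) := by
  rw [Complex.exp_mul_I]
  simp [Meq, sigmaX, sigmaY, Complex.ofReal_cos, Complex.ofReal_sin]
lemma meq01 (α : ℝ) : Meq α 0 1 = Complex.exp (-(α : ℂ) * Complex.I) := by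
  rw [Complex.exp_mul_I, Complex.cos_neg, Complex.sin_neg]
  simp [Meq, sigmaX, sigmaY, Complex.ofReal_cos, Complex.ofReal_sin]

lemma sum_ghz_weight {k : ℕ} (hk : 1 ≤ k) (g : (Fin k → Fin 2) → ℂ) :
    ∑ a, ghz k a * g a
      = ((Real.sqrt 2 : ℝ) : ℂ)⁻¹ * (g (fun _ => 0) + g (fun _ => 1)) := by
  have h01 : (fun _ => (0 : Fin 2) : Fin k → Fin 2) ≠ (fun _ => 1) := by
    intro h
    have := congrFun h ⟨0, hk⟩
    simp at this
  have hsub : ∑ a, ghz k a * g a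
      = ∑ a ∈ ({fun _ => 0, fun _ => 1} : Finset (Fin k → Fin 2)), ghz k a * g a := by
    refine (Finset.sum_subset (Finset.subset_univ _) ?_).symm
    intro a _ ha
    simp only [Finset.mem_insert, Finset.mem_singleton] at ha
    push_neg at ha
    have hz : ¬ ((∀ i, a i = 0) ∨ (∀ i, a i = 1)) := by
      rintro (h | h)
      · exact ha.1 (funext h)
      · exact ha.2 (funext h)
    simp [ghz, hz]
  rw [hsub, Finset.sum_pair h01]
  have g0 : ghz k (fun _ => 0) = ((Real.sqrt 2 : ℝ) : ℂ)⁻¹ := by simp [ghz]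
  have g1 : ghz k (fun _ => 1) = ((Real.sqrt 2 : ℝ) : ℂ)⁻¹ := by simp [ghz]
  rw [g0, g1]; ring

lemma ghz_inner {k : ℕ} (hk : 1 ≤ k) (α : Fin k → ℝ) :
    inprod (ghz k) ((tensorOp fun i => Meq (α i)).mulVec (ghz k))
      = ((Real.cos (∑ i, α i) : ℝ) : ℂ) := by
  have hconj : ∀ a, (starRingEnd ℂ) (ghz k a) = ghz k a := by
    intro a
    simp only [ghz]
    split
    · rw [map_inv₀, Complex.conj_ofReal]
    · simp
  have i0 : (⟨0, hk⟩ : Fin k) ∈ (Finset.univ : Finset (Fin k)) := Finset.mem_univ _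
  have t00 : tensorOp (fun i => Meq (α i)) (fun _ => 0) (fun _ => 0) = 0 := by
    refine Finset.prod_eq_zero i0 ?_
    exact meq00 _
  have t11 : tensorOp (fun i => Meq (α i)) (fun _ => 1) (fun _ => 1) = 0 := by
    refine Finset.prod_eq_zero i0 ?_
    exact meq11 _
  have t01 : tensorOp (fun i => Meq (α i)) (fun _ => 0) (fun _ => 1)
      = Complex.exp (-((∑ i, α i : ℝ) : ℂ) * Complex.I) := by
    show (∏ i, Meq (α i) 0 1) = _
    simp only [meq01]
    rw [← Complex.exp_sum]
    congr 1
    push_cast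
    rw [← Finset.sum_mul]
    congr 1
    simp
  have t10 : tensorOp (fun i => Meq (α i)) (fun _ => 1) (fun _ => 0)
      = Complex.exp (((∑ i, α i : ℝ) : ℂ) * Complex.I) := by
    show (∏ i, Meq (α i) 1 0) = _
    simp only [meq10]
    rw [← Complex.exp_sum]
    congr 1
    push_cast
    rw [← Finset.sum_mul]
  have hw : ∀ a, ((tensorOp fun i => Meq (α i)).mulVec (ghz k)) a
      = ∑ b, ghz k b * tensorOp (fun i => Meq (α i)) a b := by
    intro a
    simp [Matrix.mulVec, dotProduct, mul_comm]
  simp only [inprod, hconj]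
  rw [sum_ghz_weight hk]
  rw [hw, hw, sum_ghz_weight hk, sum_ghz_weight hk]
  rw [t00, t11, t01, t10]
  set c := ((Real.sqrt 2 : ℝ) : ℂ)⁻¹ with hc
  have hcc : c * c = (2 : ℂ)⁻¹ := by
    rw [hc, ← mul_inv, ← Complex.ofReal_mul, Real.mul_self_sqrt (by norm_num)]
    norm_num
  have : c * (c * (0 + Complex.exp (-((∑ i, α i : ℝ) : ℂ) * Complex.I))
      + c * (Complex.exp (((∑ i, α i : ℝ) : ℂ) * Complex.I) + 0))
      = (c * c) * (Complex.exp (((∑ i, α i : ℝ) : ℂ) * Complex.I)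
        + Complex.exp (-((∑ i, α i : ℝ) : ℂ) * Complex.I)) := by ring
  rw [this, hcc, Complex.ofReal_cos, Complex.cos]
  ring

lemma negOnePow_mod (m : ℕ) : (-1 : ℝ) ^ (m % 2) = (-1 : ℝ) ^ m := by
  rcases Nat.even_or_odd m with h | h
  · rw [Nat.even_iff.mp h, pow_zero, h.neg_one_pow]
  · rw [Nat.odd_iff.mp h, pow_one, h.neg_one_pow]

lemma chi_pow {n : ℕ} (T : Finset (Fin n)) (x : Fin n → Bool) :
    (-1 : ℝ) ^ chi T x = ∏ i ∈ T, (if x i then (-1 : ℝ) else 1) := by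
  rw [chi, negOnePow_mod, ← Finset.prod_pow_eq_pow_sum]
  refine Finset.prod_congr rfl fun i _ => ?_
  split <;> simp

lemma orth {n : ℕ} (x y : Fin n → Bool) :
    ∑ T : Finset (Fin n), (-1 : ℝ) ^ chi T x * (-1 : ℝ) ^ chi T y
      = if x = y then (2 : ℝ) ^ n else 0 := by
  have key : ∀ T : Finset (Fin n), (-1 : ℝ) ^ chi T x * (-1 : ℝ) ^ chi T y
      = ∏ i ∈ T, ((if x i then (-1 : ℝ) else 1) * (if y i then (-1 : ℝ) else 1)) := by
    intro T
    rw [chi_pow, chi_pow, ← Finset.prod_mul_distrib]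
  simp only [key]
  have hsum : ∑ T : Finset (Fin n),
      ∏ i ∈ T, ((if x i then (-1 : ℝ) else 1) * (if y i then (-1 : ℝ) else 1))
      = ∏ i : Fin n, (((if x i then (-1 : ℝ) else 1) * (if y i then (-1 : ℝ) else 1)) + 1) := by
    rw [Finset.prod_add]
    rw [Finset.powerset_univ]
    simp
  rw [hsum]
  by_cases h : x = y
  · subst h
    simp only [if_pos rfl]
    have : ∀ i : Fin n, ((if x i then (-1 : ℝ) else 1) * (if x i then (-1 : ℝ) else 1)) + 1 = 2 := by
      intro i; split <;> norm_num
    rw [Finset.prod_congr rfl fun i _ => this i]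
    simp
  · rw [if_neg h]
    have : ∃ i, x i ≠ y i := by
      by_contra hc
      push_neg at hc
      exact h (funext hc)
    obtain ⟨i, hi⟩ := this
    refine Finset.prod_eq_zero (Finset.mem_univ i) ?_
    cases hx : x i <;> cases hy : y i <;> simp [hx, hy] at hi ⊢

lemma fourier_inversion {n : ℕ} (g : (Fin n → Bool) → ℝ) (x : Fin n → Bool) :
    ∑ T : Finset (Fin n), fourierCoef g T * (-1 : ℝ) ^ chi T x = g x := by
  simp only [fourierCoef]
  have h1 : ∀ T : Finset (Fin n),
      (2 ^ n : ℝ)⁻¹ * (∑ y : Fin n → Bool, g y * (-1 : ℝ) ^ chi T y) * (-1 : ℝ) ^ chi T x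
      = (2 ^ n : ℝ)⁻¹ * ∑ y : Fin n → Bool, g y * ((-1 : ℝ) ^ chi T y * (-1 : ℝ) ^ chi T x) := by
    intro T
    rw [mul_assoc, Finset.sum_mul, Finset.mul_sum, Finset.mul_sum]
    exact Finset.sum_congr rfl fun y _ => by ring
  simp only [h1]
  rw [← Finset.mul_sum, Finset.sum_comm]
  have h2 : ∀ y : Fin n → Bool,
      ∑ T : Finset (Fin n), g y * ((-1 : ℝ) ^ chi T y * (-1 : ℝ) ^ chi T x)
      = g y * (if y = x then (2 : ℝ) ^ n else 0) := by
    intro y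
    rw [← Finset.mul_sum, orth]
  simp only [h2, mul_ite, mul_zero]
  rw [Finset.sum_ite_eq' Finset.univ x (fun y => g y * (2 : ℝ) ^ n)]
  simp only [Finset.mem_univ, if_true]
  field_simp

/-- Correctness of the Fourier-representation construction: if `S₁, …, S_k` enumerate the
nonempty sets with nonzero Fourier coefficient of `f`, `Θ = π Σ_S f̂(S)` and
`φᵢ = −2π f̂(Sᵢ)`, then measuring `Mᵢ = cos(Θ/k + φᵢ sᵢ) σx + sin(Θ/k + φᵢ sᵢ) σy`
(with `sᵢ = χ_{Sᵢ}(x)`) on the `k`-qubit GHZ state yields `(−1)^{f(x)}`. -/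
theorem fourier_construction_correct (n k : ℕ) (hk : 1 ≤ k)
    (f : (Fin n → Bool) → Bool)
    (S : Fin k → Finset (Fin n)) (hinj : Function.Injective S)
    (hS : ∀ T : Finset (Fin n),
      (T.Nonempty ∧ fourierCoef (boolToReal f) T ≠ 0) ↔ ∃ i, S i = T) :
    ∀ x : Fin n → Bool,
      inprod (ghz k)
        ((tensorOp fun i => Meq
            ((Real.pi * ∑ T : Finset (Fin n), fourierCoef (boolToReal f) T) / (k : ℝ)
              + (-2 * Real.pi * fourierCoef (boolToReal f) (S i)) * (chi (S i) x : ℝ))).mulVec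
          (ghz k))
        = (if f x then (-1 : ℂ) else 1) := by
  intro x
  set c : Finset (Fin n) → ℝ := fourierCoef (boolToReal f) with hc
  rw [ghz_inner hk (fun i =>
    (Real.pi * ∑ T : Finset (Fin n), c T) / (k : ℝ)
      + (-2 * Real.pi * c (S i)) * (chi (S i) x : ℝ))]
  -- sum over i of the contributions of the nonzero Fourier coefficients
  have hS' : ∑ i, c (S i) * (chi (S i) x : ℝ)
      = ∑ T : Finset (Fin n), c T * (chi T x : ℝ) := by
    have himage : Finset.image S Finset.univ
        = Finset.univ.filter (fun T => T.Nonempty ∧ c T ≠ 0) := by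
      ext T
      simp only [Finset.mem_image, Finset.mem_filter, Finset.mem_univ, true_and]
      constructor
      · rintro ⟨i, rfl⟩
        exact (hS (S i)).mpr ⟨i, rfl⟩
      · intro h
        obtain ⟨i, rfl⟩ := (hS T).mp h
        exact ⟨i, rfl⟩
    have h2 : ∑ T : Finset (Fin n), c T * (chi T x : ℝ)
        = ∑ T ∈ Finset.univ.filter (fun T => T.Nonempty ∧ c T ≠ 0), c T * (chi T x : ℝ) := by
      refine (Finset.sum_subset (Finset.filter_subset _ _) ?_).symm
      intro T _ hT
      simp only [Finset.mem_filter, Finset.mem_univ, true_and] at hT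
      by_cases hne : T.Nonempty
      · have hz : c T = 0 := by
          by_contra hzz
          exact hT ⟨hne, hzz⟩
        simp [hz]
      · have : T = ∅ := Finset.not_nonempty_iff_eq_empty.mp hne
        subst this
        simp [chi]
    rw [h2, ← himage, Finset.sum_image (fun a _ b _ h => hinj h)]
  -- each parity is 0 or 1, so (-1)^s = 1 - 2s
  have hpm : ∀ T : Finset (Fin n), (-1 : ℝ) ^ chi T x = 1 - 2 * (chi T x : ℝ) := by
    intro T
    have h01 : chi T x = 0 ∨ chi T x = 1 :=
      Nat.mod_two_eq_zero_or_one (∑ i ∈ T, if x i then 1 else 0)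
    rcases h01 with h | h <;> rw [h] <;> norm_num
  have hk' : (k : ℝ) ≠ 0 := Nat.cast_ne_zero.mpr (by omega)
  have hA : ∑ i, ((Real.pi * ∑ T : Finset (Fin n), c T) / (k : ℝ)
        + (-2 * Real.pi * c (S i)) * (chi (S i) x : ℝ))
      = Real.pi * (∑ T : Finset (Fin n), c T)
        - 2 * Real.pi * ∑ i, c (S i) * (chi (S i) x : ℝ) := by
    rw [Finset.sum_add_distrib, Finset.sum_const, Finset.card_univ, Fintype.card_fin,
      nsmul_eq_mul]
    have e1 : (k : ℝ) * ((Real.pi * ∑ T : Finset (Fin n), c T) / (k : ℝ))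
        = Real.pi * ∑ T : Finset (Fin n), c T := by
      field_simp
    have e2 : ∑ i, (-2 * Real.pi * c (S i)) * (chi (S i) x : ℝ)
        = -2 * Real.pi * ∑ i, c (S i) * (chi (S i) x : ℝ) := by
      rw [Finset.mul_sum]
      exact Finset.sum_congr rfl fun i _ => by ring
    rw [e1, e2]
    ring
  have hB : Real.pi * boolToReal f x
      = Real.pi * (∑ T : Finset (Fin n), c T)
        - 2 * Real.pi * ∑ T : Finset (Fin n), c T * (chi T x : ℝ) := by
    rw [← fourier_inversion (boolToReal f) x]
    have e3 : ∑ T : Finset (Fin n), c T * (-1 : ℝ) ^ chi T x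
        = (∑ T : Finset (Fin n), c T) - 2 * ∑ T : Finset (Fin n), c T * (chi T x : ℝ) := by
      rw [Finset.mul_sum, ← Finset.sum_sub_distrib]
      exact Finset.sum_congr rfl fun T _ => by rw [hpm T]; ring
    rw [hc] at e3 ⊢
    rw [e3]
    ring
  have hsum : ∑ i, ((Real.pi * ∑ T : Finset (Fin n), c T) / (k : ℝ)
        + (-2 * Real.pi * c (S i)) * (chi (S i) x : ℝ))
      = Real.pi * boolToReal f x := by
    rw [hA, hS', hB]
  rw [hsum]
  by_cases hf : f x
  · simp [boolToReal, hf, Real.cos_pi]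
  · simp [boolToReal, hf]
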